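/- Let G be a cycle on n ≥ 3 vertices. Any set S of ⌈n/2⌉ consecutive vertices of the cycle is a connected PDS of G, and it has maximum size among connected PDSs of G. -/

import Mathlib

open Finset

/-- Number of neighbors of `u` inside `S`. -/
def degIn {V : Type*} [Fintype V] [DecidableEq V] (G : SimpleGraph V) [DecidableRel G.Adj]
    (S : Finset V) (u : V) : ℕ :=
  (G.neighborFinset u ∩ S).card

/-- `u` is satisfied with respect to `S`: the PDS inequality holds at `u`. -/
def Satisfies {V : Type*} [Fintype V] [DecidableEq V] (G : SimpleGraph V) [DecidableRel G.Adj]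
    (S : Finset V) (u : V) : Prop :=
  (degIn G S u : ℚ) / ((S.card : ℚ) - 1) ≥ (degIn G Sᶜ u : ℚ) / ((Fintype.card V : ℚ) - S.card)

/-- `S` is a proportionally dense subgraph of `G`. -/
def IsPDS {V : Type*} [Fintype V] [DecidableEq V] (G : SimpleGraph V) [DecidableRel G.Adj]
    (S : Finset V) : Prop :=
  2 ≤ S.card ∧ S.card < Fintype.card V ∧ ∀ u ∈ S, Satisfies G S u

/-- The cycle graph on `ZMod n`: `x` is adjacent to `x ± 1`. -/
def cycleGraph (n : ℕ) : SimpleGraph (ZMod n) where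
  Adj x y := x ≠ y ∧ (y = x + 1 ∨ x = y + 1)
  symm := ⟨fun x y h => ⟨h.1.symm, h.2.symm⟩⟩
  loopless := ⟨fun x h => h.1 rfl⟩

instance (n : ℕ) : DecidableRel (cycleGraph n).Adj :=
  fun x y => inferInstanceAs (Decidable (x ≠ y ∧ (y = x + 1 ∨ x = y + 1)))

lemma cg_nbr (n : ℕ) [NeZero n] (hn : 3 ≤ n) (u : ZMod n) :
    (cycleGraph n).neighborFinset u = {u + 1, u - 1} := by
  haveI : Fact (1 < n) := ⟨by omega⟩
  ext y
  simp only [SimpleGraph.mem_neighborFinset, Finset.mem_insert, Finset.mem_singleton]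
  show (u ≠ y ∧ (y = u + 1 ∨ u = y + 1)) ↔ _
  constructor
  · rintro ⟨hne, h | h⟩
    · exact Or.inl h
    · exact Or.inr (by rw [h]; ring)
  · rintro (h | h)
    · refine ⟨fun he => one_ne_zero (α := ZMod n) ?_, Or.inl h⟩
      rw [h] at he; linear_combination -he
    · refine ⟨fun he => one_ne_zero (α := ZMod n) ?_, Or.inr (by rw [h]; ring)⟩
      rw [h] at he; linear_combination he

lemma degIn_add_compl {V : Type*} [Fintype V] [DecidableEq V] (G : SimpleGraph V)
    [DecidableRel G.Adj] (S : Finset V) (u : V) :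
    degIn G S u + degIn G Sᶜ u = (G.neighborFinset u).card := by
  classical
  unfold degIn
  rw [← Finset.filter_mem_eq_inter, ← Finset.filter_mem_eq_inter]
  have h := Finset.card_filter_add_card_filter_not
    (s := G.neighborFinset u) (p := (· ∈ S))
  simp only [Finset.mem_compl]
  convert h using 3

lemma cg_deg (n : ℕ) [NeZero n] (hn : 3 ≤ n) (u : ZMod n) :
    ((cycleGraph n).neighborFinset u).card = 2 := by
  rw [cg_nbr n hn u]
  rw [Finset.card_insert_of_notMem, Finset.card_singleton]
  simp only [Finset.mem_singleton]
  intro he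
  have h2 : (2 : ZMod n) ≠ 0 := by
    intro h
    have h2' : ((2:ℕ) : ZMod n) = 0 := by push_cast; exact h
    rw [ZMod.natCast_eq_zero_iff] at h2'
    have := Nat.le_of_dvd (by norm_num) h2'
    omega
  exact h2 (by linear_combination he)

lemma mem_arc (n : ℕ) [NeZero n] (k : ℕ) (hk : k ≤ n) (a x : ZMod n) :
    x ∈ (Finset.range k).image (fun i : ℕ => a + (i : ZMod n)) ↔ (x - a).val < k := by
  simp only [Finset.mem_image, Finset.mem_range]
  constructor
  · rintro ⟨i, hi, rfl⟩
    have h : (a + (i : ZMod n)) - a = (i : ZMod n) := by ring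
    rw [h, ZMod.val_cast_of_lt (lt_of_lt_of_le hi hk)]
    exact hi
  · intro h
    refine ⟨(x - a).val, h, ?_⟩
    rw [ZMod.natCast_rightInverse (x - a)]; ring

lemma card_arc (n : ℕ) [NeZero n] (k : ℕ) (hk : k ≤ n) (a : ZMod n) :
    ((Finset.range k).image (fun i : ℕ => a + (i : ZMod n))).card = k := by
  rw [Finset.card_image_of_injOn, Finset.card_range]
  intro i hi j hj hij
  simp only [Finset.coe_range, Set.mem_Iio] at hi hj
  have h : (i : ZMod n) = (j : ZMod n) := by
    have := hij; simpa using add_left_cancel this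
  have := congrArg ZMod.val h
  rwa [ZMod.val_cast_of_lt (lt_of_lt_of_le hi hk),
    ZMod.val_cast_of_lt (lt_of_lt_of_le hj hk)] at this

lemma exists_boundary (n : ℕ) [NeZero n] (S : Finset (ZMod n)) (hne : S.Nonempty)
    (hlt : S.card < n) : ∃ x ∈ S, x + 1 ∉ S := by
  by_contra h
  push_neg at h
  obtain ⟨x0, hx0⟩ := hne
  have hall : ∀ i : ℕ, x0 + (i : ZMod n) ∈ S := by
    intro i
    induction i with
    | zero => simpa using hx0
    | succ i ih =>
      have he : x0 + ((i + 1 : ℕ) : ZMod n) = (x0 + (i : ZMod n)) + 1 := by push_cast; ring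
      rw [he]; exact h _ ih
  have huniv : (Finset.univ : Finset (ZMod n)) ⊆ S := by
    intro y _
    have := hall (y - x0).val
    rwa [ZMod.natCast_rightInverse (y - x0), add_sub_cancel] at this
  have := Finset.card_le_card huniv
  rw [Finset.card_univ, ZMod.card] at this
  omega

lemma satisfies_of {V : Type*} [Fintype V] [DecidableEq V] (G : SimpleGraph V)
    [DecidableRel G.Adj] (S : Finset V) (u : V) (h2 : 2 ≤ S.card)
    (hlt : S.card < Fintype.card V) (hsum : degIn G S u + degIn G Sᶜ u = 2)
    (h1 : 1 ≤ degIn G S u) (hhalf : 2 * S.card ≤ Fintype.card V + 1) :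
    Satisfies G S u := by
  unfold Satisfies
  have hm : (2:ℚ) ≤ S.card := by exact_mod_cast h2
  have hN : (S.card:ℚ) < Fintype.card V := by exact_mod_cast hlt
  have hh : (2 * S.card:ℚ) ≤ Fintype.card V + 1 := by exact_mod_cast hhalf
  have hd1 : (1:ℚ) ≤ degIn G S u := by exact_mod_cast h1
  have hd2 : (degIn G S u : ℚ) + degIn G Sᶜ u = 2 := by exact_mod_cast hsum
  rw [ge_iff_le, div_le_div_iff₀ (by linarith) (by linarith)]
  nlinarith [hd1, hd2, hm, hN, hh]

/-- In the cycle on `n ≥ 3` vertices, any set of `⌈n/2⌉` consecutive vertices is a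
connected PDS, and it has maximum size among connected PDSs. -/
theorem stmt19 (n : ℕ) (hn : 3 ≤ n) [NeZero n] (a : ZMod n) :
    (IsPDS (cycleGraph n) ((Finset.range ((n + 1) / 2)).image (fun i : ℕ => a + (i : ZMod n))) ∧
      ((cycleGraph n).induce
        ((((Finset.range ((n + 1) / 2)).image (fun i : ℕ => a + (i : ZMod n))) : Finset (ZMod n)) :
          Set (ZMod n))).Connected) ∧
    ∀ S' : Finset (ZMod n), IsPDS (cycleGraph n) S' →
      ((cycleGraph n).induce (S' : Set (ZMod n))).Connected →
      S'.card ≤ ((Finset.range ((n + 1) / 2)).image (fun i : ℕ => a + (i : ZMod n))).card := by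
  set k := (n + 1) / 2 with hkdef
  have hk2 : 2 ≤ k := by omega
  have hkn : k < n := by omega
  have hkle : k ≤ n := le_of_lt hkn
  set S := (Finset.range k).image (fun i : ℕ => a + (i : ZMod n)) with hS
  have hcard : S.card = k := card_arc n k hkle a
  have hcardV : Fintype.card (ZMod n) = n := ZMod.card n
  have hone : (1 : ZMod n) ≠ 0 := by
    haveI : Fact (1 < n) := ⟨by omega⟩
    exact one_ne_zero
  have hmemS : ∀ i : ℕ, i < k → a + (i : ZMod n) ∈ S := by
    intro i hi
    exact Finset.mem_image.mpr ⟨i, Finset.mem_range.mpr hi, rfl⟩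
  refine ⟨⟨?_, ?_⟩, ?_⟩
  · -- IsPDS
    refine ⟨by rw [hcard]; exact hk2, by rw [hcard, hcardV]; exact hkn, ?_⟩
    intro u hu
    have hsum : degIn (cycleGraph n) S u + degIn (cycleGraph n) Sᶜ u = 2 := by
      rw [degIn_add_compl, cg_deg n hn u]
    have h1 : 1 ≤ degIn (cycleGraph n) S u := by
      rw [hS] at hu
      obtain ⟨i, hi, rfl⟩ := Finset.mem_image.mp hu
      rw [Finset.mem_range] at hi
      rcases Nat.eq_zero_or_pos i with hi0 | hipos
      · subst hi0
        have hmem : a + ((0:ℕ) : ZMod n) + 1 ∈ S := by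
          have he : a + ((0:ℕ) : ZMod n) + 1 = a + ((1:ℕ) : ZMod n) := by push_cast; ring
          rw [he]; exact hmemS 1 (by omega)
        refine Nat.one_le_iff_ne_zero.mpr (Finset.card_ne_zero_of_mem
          (a := a + ((0:ℕ) : ZMod n) + 1) (Finset.mem_inter.mpr ⟨?_, hmem⟩))
        rw [cg_nbr n hn]; simp
      · have hmem : a + (i : ZMod n) - 1 ∈ S := by
          have hc : ((i - 1 : ℕ) : ZMod n) = (i : ZMod n) - 1 := by
            push_cast [Nat.cast_sub (by omega : 1 ≤ i)]
            ring
          have he : a + (i : ZMod n) - 1 = a + ((i - 1 : ℕ) : ZMod n) := by rw [hc]; ring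
          rw [he]; exact hmemS (i - 1) (by omega)
        refine Nat.one_le_iff_ne_zero.mpr (Finset.card_ne_zero_of_mem
          (a := a + (i : ZMod n) - 1) (Finset.mem_inter.mpr ⟨?_, hmem⟩))
        rw [cg_nbr n hn]; simp
    exact satisfies_of _ _ _ (by rw [hcard]; exact hk2)
      (by rw [hcard, hcardV]; exact hkn) hsum h1 (by rw [hcard, hcardV]; omega)
  · -- Connected
    have ha : a ∈ S := by
      have := hmemS 0 (by omega)
      simpa using this
    have key : ∀ i : ℕ, (hi : i < k) →
        ((cycleGraph n).induce (S : Set (ZMod n))).Reachable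
          ⟨a, ha⟩ ⟨a + (i : ZMod n), hmemS i hi⟩ := by
      intro i
      induction i with
      | zero =>
        intro _
        have hv : (⟨a + ((0:ℕ) : ZMod n), hmemS 0 (by omega)⟩ :
            (S : Set (ZMod n))) = ⟨a, ha⟩ := Subtype.ext (by push_cast; ring)
        rw [hv]
      | succ i ih =>
        intro hi
        have hii : i < k := by omega
        refine (ih hii).trans (SimpleGraph.Adj.reachable ?_)
        show (cycleGraph n).Adj (a + (i : ZMod n)) (a + ((i + 1 : ℕ) : ZMod n))
        constructor
        · intro h
          apply hone
          push_cast at h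
          linear_combination -h
        · left; push_cast; ring
    rw [SimpleGraph.connected_iff]
    constructor
    · rintro ⟨u, hu⟩ ⟨v, hv⟩
      have hu' : u ∈ S := hu
      have hv' : v ∈ S := hv
      obtain ⟨i, hi, rfl⟩ := Finset.mem_image.mp hu'
      obtain ⟨j, hj, rfl⟩ := Finset.mem_image.mp hv'
      rw [Finset.mem_range] at hi hj
      exact (key i hi).symm.trans (key j hj)
    · exact ⟨⟨a, ha⟩⟩
  · -- maximality
    intro S' hS' _
    obtain ⟨h2', hlt', hsat⟩ := hS'
    rw [hcardV] at hlt'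
    have hne : S'.Nonempty := Finset.card_pos.mp (by omega)
    obtain ⟨x, hx, hx1⟩ := exists_boundary n S' hne hlt'
    have hsum : degIn (cycleGraph n) S' x + degIn (cycleGraph n) S'ᶜ x = 2 := by
      rw [degIn_add_compl, cg_deg n hn x]
    have hd1 : degIn (cycleGraph n) S' x ≤ 1 := by
      have hsub : (cycleGraph n).neighborFinset x ∩ S' ⊆ {x - 1} := by
        rw [cg_nbr n hn]
        intro y hy
        obtain ⟨hy1, hy2⟩ := Finset.mem_inter.mp hy
        rcases Finset.mem_insert.mp hy1 with h | h
        · exact absurd (h ▸ hy2) hx1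
        · exact h
      calc degIn (cycleGraph n) S' x ≤ ({x - 1} : Finset (ZMod n)).card :=
            Finset.card_le_card hsub
        _ = 1 := Finset.card_singleton _
    have hd2 : 1 ≤ degIn (cycleGraph n) S'ᶜ x := by
      refine Nat.one_le_iff_ne_zero.mpr (Finset.card_ne_zero_of_mem
        (a := x + 1) (Finset.mem_inter.mpr ⟨?_, Finset.mem_compl.mpr hx1⟩))
      rw [cg_nbr n hn]; simp
    have hsx := hsat x hx
    unfold Satisfies at hsx
    rw [hcardV] at hsx
    have hm2 : (2:ℚ) ≤ S'.card := by exact_mod_cast h2'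
    have hmn : (S'.card:ℚ) < n := by exact_mod_cast hlt'
    rw [ge_iff_le, div_le_div_iff₀ (by linarith) (by linarith)] at hsx
    have hq1 : (degIn (cycleGraph n) S' x : ℚ) ≤ 1 := by exact_mod_cast hd1
    have hq2 : (1:ℚ) ≤ (degIn (cycleGraph n) S'ᶜ x : ℚ) := by exact_mod_cast hd2
    have hfin : (2 * S'.card : ℚ) ≤ n + 1 := by nlinarith [hsx, hq1, hq2, hm2, hmn]
    have hfin' : 2 * S'.card ≤ n + 1 := by exact_mod_cast hfin
    rw [hcard]
    omega
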